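/- Suppose z ∈ ℝ^J_{≥0} is nonzero with A_z = {i : z_i = ‖z‖_∞} satisfying |A_z| > K, B_z = {i : 0 < z_i < ‖z‖_∞}, C_z = {i : z_i = 0}, and define θ_z = (∑_{j∈A_z} g'_j(z_j))/(|A_z|−K). If (1) g'_j(z_j) ≤ θ_z for all j ∈ A_z and θ_z ≤ g'_ℓ(z_ℓ) for all ℓ ∈ C_z; (2) g'_k(z_k) = θ_z for all k ∈ B_z; and (3) ∑_i g_i(z_i) = G, then z is the unique optimal solution of the Leader-Opt problem (maximize the sum of the J−K smallest coordinates subject to ∑_j g_j(z_j) ≤ G, z ≥ 0). -/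

import Mathlib

open Finset

/-- Sum of the `J - K` smallest coordinates of `z`: the infimum of sums over
`(J-K)`-element subsets of coordinates. -/
noncomputable def sumSmallest (J K : ℕ) (z : Fin J → ℝ) : ℝ :=
  sInf {s : ℝ | ∃ S : Finset (Fin J), S.card = J - K ∧ s = ∑ i ∈ S, z i}

/-- Feasible stuffing vectors: nonnegative, total cost at most `G`. -/
def Feasible (J : ℕ) (g : Fin J → ℝ → ℝ) (G : ℝ) : Set (Fin J → ℝ) :=
  {z | (∀ j, 0 ≤ z j) ∧ ∑ j, g j (z j) ≤ G}

/-- Strict gradient inequality for a strictly convex differentiable function on `[0,∞)`. -/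
lemma grad_lt_aux {f : ℝ → ℝ} (hf : StrictConvexOn ℝ (Set.Ici 0) f)
    (hd : Differentiable ℝ f) {x y : ℝ} (hx : (0:ℝ) ≤ x) (hy : (0:ℝ) ≤ y) (hne : y ≠ x) :
    f x + deriv f x * (y - x) < f y := by
  rcases hne.lt_or_gt with h | h
  · have hs := hf.slope_lt_deriv (Set.mem_Ici.2 hy) (Set.mem_Ici.2 hx) h (hd x)
    rw [slope_def_field] at hs
    have hxy : (0:ℝ) < x - y := sub_pos.2 h
    rw [div_lt_iff₀ hxy] at hs
    nlinarith
  · have hs := hf.deriv_lt_slope (Set.mem_Ici.2 hx) (Set.mem_Ici.2 hy) h (hd x)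
    rw [slope_def_field] at hs
    have hxy : (0:ℝ) < y - x := sub_pos.2 h
    rw [lt_div_iff₀ hxy] at hs
    nlinarith

/-- The set of sums over `(J-K)`-subsets is finite. -/
lemma sumSet_finite (J K : ℕ) (w : Fin J → ℝ) :
    Set.Finite {s : ℝ | ∃ S : Finset (Fin J), S.card = J - K ∧ s = ∑ i ∈ S, w i} := by
  have : {s : ℝ | ∃ S : Finset (Fin J), S.card = J - K ∧ s = ∑ i ∈ S, w i} ⊆
      (fun S : Finset (Fin J) => ∑ i ∈ S, w i) '' Set.univ := by
    rintro s ⟨S, _, rfl⟩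
    exact ⟨S, Set.mem_univ _, rfl⟩
  exact Set.Finite.subset (Set.Finite.image _ (Set.finite_univ)) this

lemma sumSmallest_le (J K : ℕ) (w : Fin J → ℝ) (S : Finset (Fin J)) (hS : S.card = J - K) :
    sumSmallest J K w ≤ ∑ i ∈ S, w i := by
  exact csInf_le (Set.Finite.bddBelow (sumSet_finite J K w)) ⟨S, hS, rfl⟩

lemma le_sumSmallest (J K : ℕ) (hKJ : K ≤ J) (w : Fin J → ℝ) (c : ℝ)
    (h : ∀ S : Finset (Fin J), S.card = J - K → c ≤ ∑ i ∈ S, w i) :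
    c ≤ sumSmallest J K w := by
  obtain ⟨S₀, -, hS₀⟩ := Finset.exists_subset_card_eq (s := (Finset.univ : Finset (Fin J))) (n := J - K)
    (by simp [Nat.sub_le])
  refine le_csInf ⟨∑ i ∈ S₀, w i, S₀, hS₀, rfl⟩ ?_
  rintro s ⟨S, hS, rfl⟩
  exact h S hS

/-- Existence of a set of `m` smallest coordinates, with a separating threshold. -/
lemma exists_threshold (J : ℕ) (hJ : 0 < J) (w : Fin J → ℝ) :
    ∀ m : ℕ, m ≤ J → ∃ S : Finset (Fin J), S.card = m ∧
      ∃ t : ℝ, (∀ j ∈ S, w j ≤ t) ∧ ∀ j ∉ S, t ≤ w j := by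
  intro m
  induction m with
  | zero =>
    intro _
    obtain ⟨j₀, -, hj₀⟩ := Finset.exists_min_image Finset.univ w ⟨⟨0, hJ⟩, Finset.mem_univ _⟩
    exact ⟨∅, rfl, w j₀, by simp, fun j _ => hj₀ j (Finset.mem_univ _)⟩
  | succ m ih =>
    intro hm
    obtain ⟨S, hScard, t, htS, htSc⟩ := ih (Nat.le_of_succ_le hm)
    have hSc : Sᶜ.Nonempty := by
      rw [← Finset.card_pos, Finset.card_compl, hScard, Fintype.card_fin]
      omega
    obtain ⟨j₀, hj₀mem, hj₀⟩ := Finset.exists_min_image Sᶜ w hSc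
    have hj₀S : j₀ ∉ S := Finset.mem_compl.1 hj₀mem
    refine ⟨insert j₀ S, by rw [Finset.card_insert_of_notMem hj₀S, hScard], w j₀, ?_, ?_⟩
    · intro j hj
      rcases Finset.mem_insert.1 hj with rfl | hj
      · exact le_refl _
      · exact (htS j hj).trans (htSc j₀ hj₀S)
    · intro j hj
      rw [Finset.mem_insert, not_or] at hj
      exact hj₀ j (Finset.mem_compl.2 hj.2)

/-- Sufficiency direction of the structure theorem: a nonzero nonnegative `z`
with `|A_z| > K` satisfying the slope-order, structure-slope, and sum
conditions is the unique optimal solution of Leader-Opt. -/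
theorem stmt6 (J K : ℕ) (g : Fin J → ℝ → ℝ) (G : ℝ)
    (hK0 : 0 < K) (hK : K < J) (hG : 0 < G)
    (hconv : ∀ j, StrictConvexOn ℝ (Set.Ici 0) (g j))
    (hdiff : ∀ j, Differentiable ℝ (g j))
    (hmono : ∀ j, StrictMonoOn (g j) (Set.Ici (0 : ℝ)))
    (hzero : ∀ j, g j 0 = 0)
    (z : Fin J → ℝ) (hz0 : ∀ j, 0 ≤ z j) (hznz : z ≠ 0)
    (A B C : Finset (Fin J)) (θ : ℝ)
    (hA : A = Finset.univ.filter fun i => ∀ j, z j ≤ z i)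
    (hB : B = Finset.univ.filter fun i => 0 < z i ∧ ∃ j, z i < z j)
    (hC : C = Finset.univ.filter fun i => z i = 0)
    (hAK : K < A.card)
    (hθ : θ = (∑ j ∈ A, deriv (g j) (z j)) / ((A.card : ℝ) - K))
    (hslopeA : ∀ j ∈ A, deriv (g j) (z j) ≤ θ)
    (hslopeC : ∀ j ∈ C, θ ≤ deriv (g j) (z j))
    (hstruct : ∀ j ∈ B, deriv (g j) (z j) = θ)
    (hbudget : ∑ j, g j (z j) = G) :
    z ∈ Feasible J g G ∧
    (∀ w ∈ Feasible J g G, sumSmallest J K w ≤ sumSmallest J K z) ∧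
    (∀ w ∈ Feasible J g G, sumSmallest J K w = sumSmallest J K z → w = z) := by
  have hJ : 0 < J := hK0.trans hK
  -- the maximum value M
  obtain ⟨i₀, -, hi₀⟩ := Finset.exists_max_image Finset.univ z ⟨⟨0, hJ⟩, Finset.mem_univ _⟩
  set M := z i₀ with hMdef
  have hzM : ∀ j, z j ≤ M := fun j => hi₀ j (Finset.mem_univ _)
  have hM0 : 0 < M := by
    rcases lt_or_ge 0 M with h | h
    · exact h
    · exfalso; apply hznz; funext j
      exact le_antisymm ((hzM j).trans h) (hz0 j)
  have hAmem : ∀ i, i ∈ A ↔ z i = M := by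
    intro i
    rw [hA, Finset.mem_filter]
    constructor
    · rintro ⟨-, h⟩; exact le_antisymm (hzM i) (h i₀)
    · intro h; exact ⟨Finset.mem_univ _, fun j => h ▸ hzM j⟩
  have hCmem : ∀ i, i ∈ C ↔ z i = 0 := by
    intro i; rw [hC, Finset.mem_filter]; simp
  -- positivity of derivatives at positive points
  have hder_pos : ∀ j, 0 < z j → 0 < deriv (g j) (z j) := by
    intro j hzj
    have hs := (hconv j).slope_lt_deriv (Set.mem_Ici.2 le_rfl) (Set.mem_Ici.2 (hz0 j))
      hzj ((hdiff j) (z j))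
    rw [slope_def_field, hzero j] at hs
    have : 0 < g j (z j) := by
      have := (hmono j) (Set.mem_Ici.2 le_rfl) (Set.mem_Ici.2 (hz0 j)) hzj
      rwa [hzero j] at this
    have hslope : 0 < (g j (z j) - 0) / (z j - 0) := by
      apply div_pos (by linarith) (by linarith)
    linarith
  have hcardA : (0:ℝ) < (A.card : ℝ) - K := by
    have : (K:ℝ) < A.card := by exact_mod_cast hAK
    linarith
  have hθpos : 0 < θ := by
    rw [hθ]
    apply div_pos _ hcardA
    apply Finset.sum_pos
    · intro j hj
      exact hder_pos j ((hAmem j).1 hj ▸ hM0)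
    · rw [← Finset.card_pos]; omega
  have hθne : θ ≠ 0 := ne_of_gt hθpos
  have hθsum : ∑ j ∈ A, deriv (g j) (z j) = θ * ((A.card : ℝ) - K) := by
    rw [hθ]; field_simp
  -- the dual weights
  set lam : Fin J → ℝ := fun j => if j ∈ A then deriv (g j) (z j) / θ else 1 with hlamdef
  have hlam0 : ∀ j, 0 ≤ lam j := by
    intro j; rw [hlamdef]; dsimp only
    split
    · exact div_nonneg (hder_pos j ((hAmem j).1 (by assumption) ▸ hM0)).le hθpos.le
    · norm_num
  have hlam1 : ∀ j, lam j ≤ 1 := by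
    intro j; rw [hlamdef]; dsimp only
    split
    · exact (div_le_one hθpos).2 (hslopeA j (by assumption))
    · norm_num
  have hcardAJ : A.card ≤ J := by
    have := Finset.card_le_univ A; simpa using this
  have hlamsum : ∑ j, lam j = (J : ℝ) - K := by
    rw [← Finset.sum_add_sum_compl A]
    have h1 : ∑ j ∈ A, lam j = (A.card : ℝ) - K := by
      rw [show ∑ j ∈ A, lam j = ∑ j ∈ A, deriv (g j) (z j) / θ from
        Finset.sum_congr rfl fun j hj => by rw [hlamdef]; simp [hj]]
      rw [← Finset.sum_div, hθsum]
      field_simp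
    have h2 : ∑ j ∈ Aᶜ, lam j = (J : ℝ) - A.card := by
      rw [show ∑ j ∈ Aᶜ, lam j = ∑ _j ∈ Aᶜ, (1:ℝ) from
        Finset.sum_congr rfl fun j hj => by
          rw [hlamdef]; simp [Finset.mem_compl.1 hj]]
      rw [Finset.sum_const, Finset.card_compl, Fintype.card_fin, nsmul_eq_mul, mul_one,
        Nat.cast_sub hcardAJ]
    rw [h1, h2]; ring
  -- key per-coordinate strict inequality
  have hkeys : ∀ j, ∀ y : ℝ, 0 ≤ y → y ≠ z j →
      θ * lam j * (y - z j) < g j y - g j (z j) := by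
    intro j y hy hne
    by_cases hjA : j ∈ A
    · have hl : θ * lam j = deriv (g j) (z j) := by
        rw [hlamdef]; simp only [hjA, if_pos]
        field_simp
      rw [hl]
      have := grad_lt_aux (hconv j) (hdiff j) (hz0 j) hy hne
      linarith
    · have hl : lam j = 1 := by rw [hlamdef]; simp [hjA]
      rw [hl, mul_one]
      rcases eq_or_lt_of_le (hz0 j) with hz | hz
      · -- z j = 0, so j ∈ C
        have hjC : j ∈ C := (hCmem j).2 hz.symm
        have hθle : θ ≤ deriv (g j) 0 := by
          have := hslopeC j hjC; rwa [← hz] at this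
        have hy' : 0 < y := lt_of_le_of_ne hy (by rw [← hz] at hne; exact Ne.symm hne)
        have hgrad := grad_lt_aux (hconv j) (hdiff j) (le_refl (0:ℝ)) hy
          (by rw [← hz] at hne; exact hne)
        rw [hzero j] at hgrad
        have h1 : θ * y ≤ deriv (g j) 0 * y := mul_le_mul_of_nonneg_right hθle hy
        rw [← hz, hzero j]
        nlinarith
      · -- 0 < z j and j ∉ A, so j ∈ B
        have hjB : j ∈ B := by
          rw [hB, Finset.mem_filter]
          refine ⟨Finset.mem_univ _, hz, ?_⟩
          by_contra hcon
          push_neg at hcon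
          exact hjA ((hA ▸ Finset.mem_filter.2 ⟨Finset.mem_univ _, hcon⟩))
        have hd := hstruct j hjB
        rw [← hd]
        have := grad_lt_aux (hconv j) (hdiff j) (hz0 j) hy hne
        linarith
  have hkey : ∀ j, ∀ y : ℝ, 0 ≤ y → θ * lam j * (y - z j) ≤ g j y - g j (z j) := by
    intro j y hy
    rcases eq_or_ne y (z j) with rfl | hne
    · simp
    · exact (hkeys j y hy hne).le
  -- H4 : sumSmallest z = ∑ lam * z
  have hlamzA : ∑ j ∈ A, lam j * z j = M * ((A.card : ℝ) - K) := by
    have h1 : ∀ j ∈ A, lam j * z j = deriv (g j) (z j) * M / θ := by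
      intro j hj
      have hzj := (hAmem j).1 hj
      simp only [hlamdef, hj, if_pos]
      rw [hzj]; ring
    rw [Finset.sum_congr rfl h1, ← Finset.sum_div, ← Finset.sum_mul, hθsum]
    field_simp
  have hlamz : ∑ j, lam j * z j = M * ((A.card : ℝ) - K) + ∑ j ∈ Aᶜ, z j := by
    rw [← Finset.sum_add_sum_compl A, hlamzA]
    congr 1
    exact Finset.sum_congr rfl fun j hj => by
      rw [hlamdef]; simp [Finset.mem_compl.1 hj]
  have H4 : sumSmallest J K z = ∑ j, lam j * z j := by
    apply le_antisymm
    · -- exhibit a subset achieving it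
      obtain ⟨S', hS'A, hS'card⟩ := Finset.exists_subset_card_eq (s := A) (n := A.card - K) (Nat.sub_le _ _)
      have hdisj : Disjoint S' Aᶜ :=
        disjoint_compl_right.mono_left hS'A
      have hcard : (S' ∪ Aᶜ).card = J - K := by
        rw [Finset.card_union_of_disjoint hdisj, hS'card, Finset.card_compl, Fintype.card_fin]
        omega
      have hsum : ∑ i ∈ S' ∪ Aᶜ, z i = ∑ j, lam j * z j := by
        rw [Finset.sum_union hdisj, hlamz]
        congr 1
        rw [show ∑ i ∈ S', z i = ∑ _i ∈ S', M from
          Finset.sum_congr rfl fun i hi => (hAmem i).1 (hS'A hi)]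
        rw [Finset.sum_const, hS'card, nsmul_eq_mul, Nat.cast_sub hAK.le]
        ring
      rw [← hsum]
      exact sumSmallest_le J K z _ hcard
    · apply le_sumSmallest J K hK.le
      intro S hS
      have hcardSc : (Sᶜ).card = K := by
        rw [Finset.card_compl, Fintype.card_fin, hS]; omega
      have h1 : ∑ i ∈ Sᶜ, z i ≤ (K : ℝ) * M := by
        calc ∑ i ∈ Sᶜ, z i ≤ ∑ _i ∈ Sᶜ, M := Finset.sum_le_sum fun i _ => hzM i
        _ = (K : ℝ) * M := by rw [Finset.sum_const, hcardSc, nsmul_eq_mul]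
      have h2 : ∑ i ∈ S, z i = ∑ j, z j - ∑ i ∈ Sᶜ, z i := by
        rw [← Finset.sum_add_sum_compl S]; ring
      have h3 : ∑ j, z j = M * (A.card : ℝ) + ∑ j ∈ Aᶜ, z j := by
        rw [← Finset.sum_add_sum_compl A]
        congr 1
        rw [show ∑ j ∈ A, z j = ∑ _j ∈ A, M from
          Finset.sum_congr rfl fun j hj => (hAmem j).1 hj]
        rw [Finset.sum_const, nsmul_eq_mul]; ring
      rw [hlamz, h2, h3]
      nlinarith
  -- H1 : for any nonneg w, sumSmallest w ≤ ∑ lam * w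
  have H1 : ∀ w : Fin J → ℝ, (∀ j, 0 ≤ w j) → sumSmallest J K w ≤ ∑ j, lam j * w j := by
    intro w hw0
    obtain ⟨S, hScard, t, htS, htSc⟩ := exists_threshold J hJ w (J - K) (Nat.sub_le _ _)
    have hcastS : (S.card : ℝ) = (J : ℝ) - K := by
      rw [hScard, Nat.cast_sub hK.le]
    have hstep : ∑ i ∈ S, w i ≤ ∑ j, lam j * w j := by
      have e1 : ∑ j, lam j * w j = ∑ j, lam j * (w j - t) + t * ((J:ℝ) - K) := by
        rw [← hlamsum, Finset.mul_sum, ← Finset.sum_add_distrib]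
        congr 1; ext j; ring
      have e2 : ∑ i ∈ S, w i = ∑ i ∈ S, (w i - t) + t * ((J:ℝ) - K) := by
        rw [← hcastS, Finset.sum_sub_distrib, Finset.sum_const, nsmul_eq_mul]
        ring
      rw [e1, e2]
      have hsplit : ∑ j, lam j * (w j - t) =
          ∑ j ∈ S, lam j * (w j - t) + ∑ j ∈ Sᶜ, lam j * (w j - t) :=
        (Finset.sum_add_sum_compl S _).symm
      have hS1 : ∑ i ∈ S, (w i - t) ≤ ∑ j ∈ S, lam j * (w j - t) := by
        apply Finset.sum_le_sum
        intro i hi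
        have h1 : w i - t ≤ 0 := sub_nonpos.2 (htS i hi)
        have := mul_le_mul_of_nonpos_right (hlam1 i) h1
        rwa [one_mul] at this
      have hS2 : 0 ≤ ∑ j ∈ Sᶜ, lam j * (w j - t) := by
        apply Finset.sum_nonneg
        intro j hj
        exact mul_nonneg (hlam0 j) (sub_nonneg.2 (htSc j (Finset.mem_compl.1 hj)))
      linarith
    exact (sumSmallest_le J K w S hScard).trans hstep
  -- per-coordinate inequality in divided form
  have hterm : ∀ j, ∀ y : ℝ, 0 ≤ y →
      lam j * y ≤ lam j * z j + (g j y - g j (z j)) / θ := by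
    intro j y hy
    have h := hkey j y hy
    have h2 : lam j * (y - z j) ≤ (g j y - g j (z j)) / θ := by
      rw [le_div_iff₀ hθpos]
      nlinarith
    nlinarith
  -- H2 : Lagrangian bound
  have H2 : ∀ w : Fin J → ℝ, (∀ j, 0 ≤ w j) →
      ∑ j, lam j * w j ≤ ∑ j, lam j * z j + (∑ j, g j (w j) - G) / θ := by
    intro w hw0
    calc ∑ j, lam j * w j
        ≤ ∑ j, (lam j * z j + (g j (w j) - g j (z j)) / θ) :=
          Finset.sum_le_sum fun j _ => hterm j (w j) (hw0 j)
      _ = ∑ j, lam j * z j + (∑ j, g j (w j) - G) / θ := by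
          rw [Finset.sum_add_distrib, ← Finset.sum_div, Finset.sum_sub_distrib, hbudget]
  have H3 : ∀ w : Fin J → ℝ, w ∈ Feasible J g G → (∑ j, g j (w j) - G) / θ ≤ 0 := by
    intro w hw
    have h1 : ∑ j, g j (w j) - G ≤ 0 := sub_nonpos.2 hw.2
    exact div_nonpos_of_nonpos_of_nonneg h1 hθpos.le
  refine ⟨⟨hz0, hbudget.le⟩, ?_, ?_⟩
  · intro w hw
    have := H3 w hw
    calc sumSmallest J K w ≤ ∑ j, lam j * w j := H1 w hw.1
      _ ≤ ∑ j, lam j * z j + (∑ j, g j (w j) - G) / θ := H2 w hw.1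
      _ ≤ ∑ j, lam j * z j := by linarith
      _ = sumSmallest J K z := H4.symm
  · intro w hw heq
    have hX1 := H1 w hw.1
    have hX2 := H2 w hw.1
    have hX3 := H3 w hw
    have e1 : ∑ j, lam j * w j = ∑ j, lam j * z j := by
      apply le_antisymm
      · linarith
      · calc ∑ j, lam j * z j = sumSmallest J K z := H4.symm
          _ = sumSmallest J K w := heq.symm
          _ ≤ ∑ j, lam j * w j := hX1
    have e2 : ∑ j, g j (w j) = G := by
      by_contra hne
      have hlt : ∑ j, g j (w j) - G < 0 :=
        lt_of_le_of_ne (sub_nonpos.2 hw.2) (sub_ne_zero.2 hne)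
      have : (∑ j, g j (w j) - G) / θ < 0 := div_neg_of_neg_of_pos hlt hθpos
      linarith
    have hterm_eq : ∀ j, lam j * w j = lam j * z j + (g j (w j) - g j (z j)) / θ := by
      by_contra hcon
      push_neg at hcon
      obtain ⟨j₀, hj₀⟩ := hcon
      have hlt : lam j₀ * w j₀ < lam j₀ * z j₀ + (g j₀ (w j₀) - g j₀ (z j₀)) / θ :=
        lt_of_le_of_ne (hterm j₀ (w j₀) (hw.1 j₀)) hj₀
      have hsumlt : ∑ j, lam j * w j <
          ∑ j, (lam j * z j + (g j (w j) - g j (z j)) / θ) :=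
        Finset.sum_lt_sum (fun j _ => hterm j (w j) (hw.1 j)) ⟨j₀, Finset.mem_univ _, hlt⟩
      rw [Finset.sum_add_distrib, ← Finset.sum_div, Finset.sum_sub_distrib, hbudget, e2,
        sub_self, zero_div, add_zero, e1] at hsumlt
      exact lt_irrefl _ hsumlt
    funext j
    by_contra hne
    have hstrict := hkeys j (w j) (hw.1 j) hne
    have heqj := hterm_eq j
    have h2 : lam j * (w j - z j) = (g j (w j) - g j (z j)) / θ := by linarith
    have h3 : θ * lam j * (w j - z j) = g j (w j) - g j (z j) := by
      rw [mul_assoc, h2]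
      field_simp
    linarith
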